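/- Let G be a reaction graph embedded in ℝ^d and let G^lir be the subgraph of G consisting of all edges whose source and target lie in different strongly connected components of G (together with their endpoints). Then G is endotactic if and only if there exists an endotactic reaction graph Ĝ with G^lir ⊆ Ĝ ⊆ G. -/
import Mathlib


open Matrix Finset
open scoped Matrix Classical

abbrev Vec (d : ℕ) := Fin d → ℝ
abbrev Edge (d : ℕ) := Vec d × Vec d

/-- Sources of edges whose reaction vector is not orthogonal to `u`. -/
def srcU {d : ℕ} (E : Finset (Edge d)) (u : Vec d) : Set (Vec d) :=
  {y | ∃ y', (y, y') ∈ E ∧ (y' - y) ⬝ᵥ u ≠ 0}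

/-- `G` is `u`-endotactic: no `u`-endotacticity violating reaction. -/
def uEndotactic {d : ℕ} (E : Finset (Edge d)) (u : Vec d) : Prop :=
  ¬ ∃ y y', (y, y') ∈ E ∧ 0 < (y' - y) ⬝ᵥ u ∧ ∀ z ∈ srcU E u, z ⬝ᵥ u ≤ y ⬝ᵥ u

def Endotactic {d : ℕ} (E : Finset (Edge d)) : Prop := ∀ u : Vec d, uEndotactic E u

/-- Reachability by a directed path. -/
def Reach {d : ℕ} (E : Finset (Edge d)) : Vec d → Vec d → Prop :=
  Relation.ReflTransGen (fun a b => (a, b) ∈ E)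

def IsEig {d : ℕ} (A : Matrix (Fin d) (Fin d) ℝ) (μ : ℂ) : Prop :=
  ∃ v : Fin d → ℂ, v ≠ 0 ∧ (A.map Complex.ofReal).mulVec v = μ • v

/-- Two vertices lie in the same strongly connected component. -/
def SCCeq {d : ℕ} (E : Finset (Edge d)) (a b : Vec d) : Prop :=
  Reach E a b ∧ Reach E b a

/-- `G` is endotactic iff some endotactic reaction graph `Ĝ` satisfies
`G^lir ⊆ Ĝ ⊆ G`, where `G^lir` consists of the edges whose endpoints lie in
different strongly connected components of `G`. -/
theorem stmt7 {d : ℕ} (E : Finset (Edge d)) (hsimple : ∀ e ∈ E, e.1 ≠ e.2) :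
    Endotactic E ↔ ∃ Ehat : Finset (Edge d), Ehat ⊆ E ∧
      (∀ e ∈ E, ¬ SCCeq E e.1 e.2 → e ∈ Ehat) ∧ Endotactic Ehat := by
  constructor
  · intro h
    exact ⟨E, Finset.Subset.refl E, fun e he _ => he, h⟩
  · rintro ⟨Ehat, hsub, hlir, hend⟩ u ⟨y, y', hmem, hpos, hmax⟩
    have hpos' : y ⬝ᵥ u < y' ⬝ᵥ u := by
      have := hpos
      rw [sub_dotProduct] at this
      linarith
    have hne : ¬ SCCeq E y y' := by
      rintro ⟨-, hback⟩
      have key : ∀ z, Reach E y' z → y ⬝ᵥ u < z ⬝ᵥ u := by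
        intro z hz
        induction hz with
        | refl => exact hpos'
        | @tail a b hab hmem' ih =>
          by_cases hzero : (b - a) ⬝ᵥ u = 0
          · rw [sub_dotProduct] at hzero
            linarith
          · exact absurd (hmax a ⟨b, hmem', hzero⟩) (not_le.mpr ih)
      exact lt_irrefl _ (key y hback)
    exact hend u ⟨y, y', hlir (y, y') hmem hne, hpos,
      fun z hz => hmax z (by obtain ⟨w, hw, hne'⟩ := hz; exact ⟨w, hsub hw, hne'⟩)⟩
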